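/- Let g be the real Lie algebra with complex structure defined by a basis of (1,0)-forms {ω¹,ω²,ω³} satisfying dω¹ = A ω¹∧ω³ + B ω¹∧ω̄³, dω² = C ω²∧ω³ + D ω²∧ω̄³, dω³ = 0 for complex constants A,B,C,D. Then g is unimodular (i.e. the trace of every adjoint map ad_X vanishes) if and only if A + conj(B) + C + conj(D) = 0. -/

import Mathlib

/-- The (complexified) Lie algebra with (1,0)-coframe satisfying
`dω¹ = A ω¹∧ω³ + B ω¹∧ω̄³`, `dω² = C ω²∧ω³ + D ω²∧ω̄³`, `dω³ = 0`
is unimodular (trace of every adjoint map vanishes) iff `A + conj B + C + conj D = 0`.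
The basis `b 0,…,b 5` is the dual basis `Z₁,Z₂,Z₃,Z̄₁,Z̄₂,Z̄₃` of the coframe
`ω¹,ω²,ω³,ω̄¹,ω̄²,ω̄³`; the stated structure equations translate into the listed brackets. -/
theorem stmt0 {g : Type*} [LieRing g] [LieAlgebra ℂ g]
    (A B C D : ℂ) (b : Module.Basis (Fin 6) ℂ g)
    (h20 : ⁅b 2, b 0⁆ = A • b 0)
    (h21 : ⁅b 2, b 1⁆ = C • b 1)
    (h23 : ⁅b 2, b 3⁆ = (starRingEnd ℂ) B • b 3)
    (h24 : ⁅b 2, b 4⁆ = (starRingEnd ℂ) D • b 4)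
    (h50 : ⁅b 5, b 0⁆ = B • b 0)
    (h51 : ⁅b 5, b 1⁆ = D • b 1)
    (h53 : ⁅b 5, b 3⁆ = (starRingEnd ℂ) A • b 3)
    (h54 : ⁅b 5, b 4⁆ = (starRingEnd ℂ) C • b 4)
    (h25 : ⁅b 2, b 5⁆ = 0)
    (hrest : ∀ i j : Fin 6, i ≠ 2 → i ≠ 5 → j ≠ 2 → j ≠ 5 → ⁅b i, b j⁆ = 0) :
    (∀ x : g, LinearMap.trace ℂ g (LieAlgebra.ad ℂ g x) = 0) ↔
      A + (starRingEnd ℂ) B + C + (starRingEnd ℂ) D = 0 := by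
  have key : ∀ f : Module.End ℂ g, LinearMap.trace ℂ g f = ∑ i, b.repr (f (b i)) i := by
    intro f
    rw [LinearMap.trace_eq_matrix_trace ℂ b f, Matrix.trace]
    simp [Matrix.diag, LinearMap.toMatrix_apply]
  have t2 : LinearMap.trace ℂ g (LieAlgebra.ad ℂ g (b 2)) =
      A + (starRingEnd ℂ) B + C + (starRingEnd ℂ) D := by
    rw [key, Fin.sum_univ_six]
    simp only [LieAlgebra.ad_apply, h20, h21, h23, h24, h25, lie_self, map_smul, map_zero,
      Module.Basis.repr_self, Finsupp.smul_single, smul_eq_mul, mul_one, Finsupp.single_apply,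
      Finsupp.coe_zero, Pi.zero_apply]
    norm_num
    ring
  have t5 : LinearMap.trace ℂ g (LieAlgebra.ad ℂ g (b 5)) =
      B + D + (starRingEnd ℂ) A + (starRingEnd ℂ) C := by
    have h52 : ⁅b 5, b 2⁆ = 0 := by rw [← lie_skew, h25, neg_zero]
    rw [key, Fin.sum_univ_six]
    simp only [LieAlgebra.ad_apply, h50, h51, h53, h54, h52, lie_self, map_smul, map_zero,
      Module.Basis.repr_self, Finsupp.smul_single, smul_eq_mul, mul_one, Finsupp.single_apply,
      Finsupp.coe_zero, Pi.zero_apply]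
    norm_num
  have tother : ∀ i : Fin 6, i ≠ 2 → i ≠ 5 →
      LinearMap.trace ℂ g (LieAlgebra.ad ℂ g (b i)) = 0 := by
    intro i hi2 hi5
    have e2 : ⁅b i, b 2⁆ = -⁅b 2, b i⁆ := by rw [← lie_skew]
    have e5 : ⁅b i, b 5⁆ = -⁅b 5, b i⁆ := by rw [← lie_skew]
    have c2 : ∃ c : ℂ, ⁅b 2, b i⁆ = c • b i := by
      fin_cases i
      · exact ⟨A, h20⟩
      · exact ⟨C, h21⟩
      · exact absurd rfl hi2
      · exact ⟨(starRingEnd ℂ) B, h23⟩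
      · exact ⟨(starRingEnd ℂ) D, h24⟩
      · exact absurd rfl hi5
    have c5 : ∃ c : ℂ, ⁅b 5, b i⁆ = c • b i := by
      fin_cases i
      · exact ⟨B, h50⟩
      · exact ⟨D, h51⟩
      · exact absurd rfl hi2
      · exact ⟨(starRingEnd ℂ) A, h53⟩
      · exact ⟨(starRingEnd ℂ) C, h54⟩
      · exact absurd rfl hi5
    obtain ⟨c, hc⟩ := c2
    obtain ⟨d, hd⟩ := c5
    rw [key, Fin.sum_univ_six]
    have z : ∀ j : Fin 6, j ≠ 2 → j ≠ 5 → (b.repr ⁅b i, b j⁆) j = 0 := by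
      intro j hj2 hj5
      rw [hrest i j hi2 hi5 hj2 hj5]; simp
    have z2 : (b.repr ⁅b i, b 2⁆) 2 = 0 := by
      rw [e2, hc]
      simp [Finsupp.single_apply, hi2]
    have z5 : (b.repr ⁅b i, b 5⁆) 5 = 0 := by
      rw [e5, hd]
      simp [Finsupp.single_apply, hi5]
    simp only [LieAlgebra.ad_apply]
    rw [z 0 (by decide) (by decide), z 1 (by decide) (by decide), z2,
      z 3 (by decide) (by decide), z 4 (by decide) (by decide), z5]
    ring
  constructor
  · intro h
    have := h (b 2)
    rw [t2] at this
    exact this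
  · intro hs
    have hs' : B + D + (starRingEnd ℂ) A + (starRingEnd ℂ) C = 0 := by
      have := congrArg (starRingEnd ℂ) hs
      simp only [map_add, Complex.conj_conj, map_zero] at this
      linear_combination this
    letI : LieRing (Module.End ℂ g) := LieRing.ofAssociativeRing
    have hφ : (LinearMap.trace ℂ g) ∘ₗ (LieAlgebra.ad ℂ g).toLinearMap
        = 0 := by
      apply b.ext
      intro i
      simp only [LinearMap.comp_apply, LieHom.coe_toLinearMap, LinearMap.zero_apply]
      by_cases hi2 : i = 2
      · subst hi2; rw [t2]; exact hs
      by_cases hi5 : i = 5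
      · subst hi5; rw [t5]; exact hs'
      exact tother i hi2 hi5
    intro x
    have := congrFun (congrArg DFunLike.coe hφ) x
    simpa using this
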